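/- Suppose Ψ ∈ GL_r(𝕋_s{z/θ}) satisfies Ψ^{(−1)} = ΦΨ for the matrix Φ of a rank-r Drinfeld A[t_s]-module with A_r ∈ 𝕋_s^×. Then the solution set V_φ = { g ∈ Mat_{1×r}(𝕋_s{z/θ}) : g^{(−1)}Φ = g } equals Mat_{1×r}(𝔽_q[t_1,…,t_s,z])·Ψ^{−1}; in particular V_φ is a free 𝔽_q[t_1,…,t_s,z]-module of rank r. -/

import Mathlib

open Filter

noncomputable section

/-- Membership in the Tate algebra `𝕋_s` over `K`: the coefficients tend to `0`
(for every `ε > 0` only finitely many coefficients have norm `≥ ε`). -/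
def IsTate (K : Type) [NontriviallyNormedField K] (s : ℕ)
    (f : MvPowerSeries (Fin s) K) : Prop :=
  ∀ ε : ℝ, 0 < ε → {ν : Fin s →₀ ℕ | ε ≤ ‖MvPowerSeries.coeff ν f‖}.Finite

/-- The Gauss norm `‖f‖_∞ = sup_ν |a_ν|` on the Tate algebra. -/
def gaussNorm (K : Type) [NontriviallyNormedField K] (s : ℕ)
    (f : MvPowerSeries (Fin s) K) : ℝ :=
  ⨆ ν : Fin s →₀ ℕ, ‖MvPowerSeries.coeff ν f‖

/-- The coefficient-wise twist of a power series induced by a ring endomorphism of `K`. -/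
def twPS (K : Type) [NontriviallyNormedField K] (s : ℕ) (τK : K →+* K) :
    MvPowerSeries (Fin s) K →+* MvPowerSeries (Fin s) K :=
  MvPowerSeries.map τK

/-- Membership in `𝕋_s{z/θ}`: a power series `Σ a_i z^i` over `𝕋_s` with
`‖θ‖^i ‖a_i‖_∞ → 0`, i.e. converging for `|z|_∞ ≤ |θ|_∞`. -/
def IsTateZtheta (K : Type) [NontriviallyNormedField K] (s : ℕ) (θ : K)
    (f : PowerSeries (MvPowerSeries (Fin s) K)) : Prop :=
  (∀ i : ℕ, IsTate K s (PowerSeries.coeff i f)) ∧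
  Filter.Tendsto (fun i : ℕ => ‖θ‖ ^ i * gaussNorm K s (PowerSeries.coeff i f))
    Filter.atTop (nhds 0)

open IsUltrametricDist
section aux
set_option linter.unusedSectionVars false
variable {K : Type} [NontriviallyNormedField K] [IsUltrametricDist K] {s : ℕ}

lemma isTate_bdd {f : MvPowerSeries (Fin s) K} (hf : IsTate K s f) :
    BddAbove (Set.range fun ν => ‖MvPowerSeries.coeff ν f‖) := by
  have F := hf 1 one_pos
  refine ⟨1 + ∑ ν ∈ F.toFinset, ‖MvPowerSeries.coeff ν f‖, ?_⟩
  rintro x ⟨ν, rfl⟩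
  by_cases h : (1:ℝ) ≤ ‖MvPowerSeries.coeff ν f‖
  · have hν : ν ∈ F.toFinset := by simpa using h
    have := Finset.single_le_sum (f := fun ν => ‖MvPowerSeries.coeff ν f‖)
      (fun _ _ => norm_nonneg _) hν
    linarith
  · have : (0:ℝ) ≤ ∑ ν ∈ F.toFinset, ‖MvPowerSeries.coeff ν f‖ :=
      Finset.sum_nonneg fun _ _ => norm_nonneg _
    push_neg at h; linarith

lemma gauss_nonneg (f : MvPowerSeries (Fin s) K) : 0 ≤ gaussNorm K s f :=
  Real.iSup_nonneg fun _ => norm_nonneg _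

lemma le_gauss {f : MvPowerSeries (Fin s) K} (hf : IsTate K s f) (ν : Fin s →₀ ℕ) :
    ‖MvPowerSeries.coeff ν f‖ ≤ gaussNorm K s f :=
  le_ciSup (isTate_bdd hf) ν

lemma gauss_le {f : MvPowerSeries (Fin s) K} {C : ℝ} (hC : 0 ≤ C)
    (h : ∀ ν, ‖MvPowerSeries.coeff ν f‖ ≤ C) : gaussNorm K s f ≤ C :=
  Real.iSup_le h hC

lemma IsTate.add {f g : MvPowerSeries (Fin s) K} (hf : IsTate K s f) (hg : IsTate K s g) :
    IsTate K s (f + g) := by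
  intro ε hε
  refine ((hf ε hε).union (hg ε hε)).subset ?_
  intro ν hν
  simp only [Set.mem_setOf_eq, map_add] at hν
  by_contra hc
  simp only [Set.mem_union, Set.mem_setOf_eq, not_or, not_le] at hc
  exact lt_irrefl ε (lt_of_le_of_lt (hν.trans (norm_add_le_max _ _)) (max_lt hc.1 hc.2))


lemma IsTate.zero : IsTate K s (0 : MvPowerSeries (Fin s) K) := by
  intro ε hε
  convert Set.finite_empty
  ext ν; simp [not_le, hε]

lemma IsTate.sum {ι : Type*} (t : Finset ι) (F : ι → MvPowerSeries (Fin s) K)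
    (h : ∀ i ∈ t, IsTate K s (F i)) : IsTate K s (∑ i ∈ t, F i) := by
  classical
  induction t using Finset.induction_on with
  | empty => simpa using IsTate.zero
  | @insert a u hx ih =>
    rw [Finset.sum_insert hx]
    exact (h a (Finset.mem_insert_self a u)).add
      (ih fun i hi => h i (Finset.mem_insert_of_mem hi))

lemma IsTate.mul {f g : MvPowerSeries (Fin s) K} (hf : IsTate K s f) (hg : IsTate K s g) :
    IsTate K s (f * g) := by
  intro ε hε
  obtain ⟨Bf, hBf⟩ := isTate_bdd hf
  obtain ⟨Bg, hBg⟩ := isTate_bdd hg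
  simp only [upperBounds, Set.mem_range, Set.mem_setOf_eq, forall_exists_index] at hBf hBg
  have hBf0 : (0:ℝ) ≤ Bf := (norm_nonneg _).trans (hBf 0 rfl)
  have hBg0 : (0:ℝ) ≤ Bg := (norm_nonneg _).trans (hBg 0 rfl)
  have hεf : 0 < ε / (Bg + 1) := div_pos hε (by linarith)
  have hεg : 0 < ε / (Bf + 1) := div_pos hε (by linarith)
  have Ff := hf _ hεf
  have Fg := hg _ hεg
  refine (Set.Finite.image2 (· + ·) Ff Fg).subset ?_
  intro ν hν
  simp only [Set.mem_setOf_eq] at hν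
  rw [MvPowerSeries.coeff_mul] at hν
  obtain ⟨p, hp, hle⟩ := exists_norm_finset_sum_le_of_nonempty
    (t := Finset.HasAntidiagonal.antidiagonal ν) ⟨(0, ν), by simp⟩
    (fun p => MvPowerSeries.coeff p.1 f * MvPowerSeries.coeff p.2 g)
  have hεp : ε ≤ ‖MvPowerSeries.coeff p.1 f‖ * ‖MvPowerSeries.coeff p.2 g‖ :=
    (hν.trans hle).trans (norm_mul_le _ _)
  have h1 : ε / (Bg + 1) ≤ ‖MvPowerSeries.coeff p.1 f‖ := by
    rw [div_le_iff₀ (by linarith)]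
    calc ε ≤ _ := hεp
    _ ≤ ‖MvPowerSeries.coeff p.1 f‖ * (Bg + 1) :=
      mul_le_mul_of_nonneg_left (by linarith [hBg p.2 rfl]) (norm_nonneg _)
  have h2 : ε / (Bf + 1) ≤ ‖MvPowerSeries.coeff p.2 g‖ := by
    rw [div_le_iff₀ (by linarith)]
    calc ε ≤ _ := hεp
    _ ≤ ‖MvPowerSeries.coeff p.2 g‖ * (Bf + 1) := by
      rw [mul_comm (‖MvPowerSeries.coeff p.1 f‖)]
      exact mul_le_mul_of_nonneg_left (by linarith [hBf p.1 rfl]) (norm_nonneg _)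
  exact ⟨p.1, h1, p.2, h2, Finset.HasAntidiagonal.mem_antidiagonal.mp hp⟩

lemma gauss_sum_le {ι : Type*} {t : Finset ι} {F : ι → MvPowerSeries (Fin s) K} {C : ℝ}
    (hC : 0 ≤ C) (h : ∀ i ∈ t, IsTate K s (F i)) (hle : ∀ i ∈ t, gaussNorm K s (F i) ≤ C) :
    gaussNorm K s (∑ i ∈ t, F i) ≤ C := by
  refine gauss_le hC fun ν => ?_
  rw [map_sum]
  exact norm_sum_le_of_forall_le_of_nonneg hC fun i hi =>
    (le_gauss (h i hi) ν).trans (hle i hi)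

lemma gauss_mul_le {f g : MvPowerSeries (Fin s) K} (hf : IsTate K s f) (hg : IsTate K s g) :
    gaussNorm K s (f * g) ≤ gaussNorm K s f * gaussNorm K s g := by
  refine gauss_le (mul_nonneg (gauss_nonneg f) (gauss_nonneg g)) fun ν => ?_
  rw [MvPowerSeries.coeff_mul]
  refine norm_sum_le_of_forall_le_of_nonneg
    (mul_nonneg (gauss_nonneg f) (gauss_nonneg g)) fun p _ => ?_
  exact (norm_mul_le _ _).trans
    (mul_le_mul (le_gauss hf p.1) (le_gauss hg p.2) (norm_nonneg _) (gauss_nonneg f))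


lemma conv_small {u v : ℕ → ℝ} (hu0 : ∀ i, 0 ≤ u i) (hv0 : ∀ i, 0 ≤ v i)
    (hu : Filter.Tendsto u Filter.atTop (nhds 0))
    (hv : Filter.Tendsto v Filter.atTop (nhds 0)) {ε : ℝ} (hε : 0 < ε) :
    ∀ᶠ i in Filter.atTop, ∀ p : ℕ × ℕ, p.1 + p.2 = i → u p.1 * v p.2 < ε := by
  obtain ⟨U, hU⟩ := hu.bddAbove_range
  obtain ⟨V, hV⟩ := hv.bddAbove_range
  simp only [upperBounds, Set.mem_range, Set.mem_setOf_eq, forall_exists_index] at hU hV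
  have hU0 : (0:ℝ) ≤ U := (hu0 0).trans (hU 0 rfl)
  have hV0 : (0:ℝ) ≤ V := (hv0 0).trans (hV 0 rfl)
  have h1 : ∀ᶠ a in Filter.atTop, u a < ε / (V + 1) :=
    hu.eventually (Iio_mem_nhds (div_pos hε (by linarith)))
  have h2 : ∀ᶠ a in Filter.atTop, v a < ε / (U + 1) :=
    hv.eventually (Iio_mem_nhds (div_pos hε (by linarith)))
  obtain ⟨N1, hN1⟩ := Filter.eventually_atTop.mp h1
  obtain ⟨N2, hN2⟩ := Filter.eventually_atTop.mp h2
  refine Filter.eventually_atTop.mpr ⟨N1 + N2, fun i hi p hp => ?_⟩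
  rcases le_or_gt N1 p.1 with h | h
  · calc u p.1 * v p.2 ≤ u p.1 * (V + 1) :=
        mul_le_mul_of_nonneg_left (by linarith [hV p.2 rfl]) (hu0 _)
    _ < (ε / (V + 1)) * (V + 1) :=
        mul_lt_mul_of_pos_right (hN1 _ h) (by linarith)
    _ = ε := div_mul_cancel₀ ε (by linarith)
  · have h2' : N2 ≤ p.2 := by omega
    calc u p.1 * v p.2 ≤ (U + 1) * v p.2 :=
        mul_le_mul_of_nonneg_right (by linarith [hU p.1 rfl]) (hv0 _)
    _ < (U + 1) * (ε / (U + 1)) :=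
        mul_lt_mul_of_pos_left (hN2 _ h2') (by linarith)
    _ = ε := mul_div_cancel₀ ε (by linarith)

end aux

section aux2
set_option linter.unusedSectionVars false
variable {K : Type} [NontriviallyNormedField K] [IsUltrametricDist K] {s : ℕ} {θ : K}

lemma gauss_zero : gaussNorm K s 0 = 0 := by
  have : ∀ ν : Fin s →₀ ℕ, ‖MvPowerSeries.coeff ν (0 : MvPowerSeries (Fin s) K)‖ = 0 := by simp
  simp [gaussNorm, this]

lemma IsTateZtheta.zero : IsTateZtheta K s θ 0 := by
  refine ⟨fun i => by simpa using IsTate.zero, ?_⟩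
  have : ∀ i : ℕ, ‖θ‖ ^ i * gaussNorm K s (PowerSeries.coeff i (0:PowerSeries (MvPowerSeries (Fin s) K))) = 0 := by
    intro i; simp [gauss_zero]
  simp only [this]
  exact tendsto_const_nhds

lemma IsTateZtheta.add {f g : PowerSeries (MvPowerSeries (Fin s) K)}
    (hf : IsTateZtheta K s θ f) (hg : IsTateZtheta K s θ g) : IsTateZtheta K s θ (f + g) := by
  refine ⟨fun i => by rw [map_add]; exact (hf.1 i).add (hg.1 i), ?_⟩
  apply squeeze_zero (g := fun i => ‖θ‖ ^ i * gaussNorm K s (PowerSeries.coeff i f)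
      + ‖θ‖ ^ i * gaussNorm K s (PowerSeries.coeff i g))
  · intro i; exact mul_nonneg (pow_nonneg (norm_nonneg _) _) (gauss_nonneg _)
  · intro i
    rw [← mul_add]
    refine mul_le_mul_of_nonneg_left ?_ (pow_nonneg (norm_nonneg _) _)
    rw [map_add]
    refine gauss_le (add_nonneg (gauss_nonneg _) (gauss_nonneg _)) fun ν => ?_
    rw [map_add]
    exact (norm_add_le _ _).trans (add_le_add (le_gauss (hf.1 i) ν) (le_gauss (hg.1 i) ν))
  · simpa using hf.2.add hg.2

lemma IsTateZtheta.sum {ι : Type*} (t : Finset ι) (F : ι → PowerSeries (MvPowerSeries (Fin s) K))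
    (h : ∀ i ∈ t, IsTateZtheta K s θ (F i)) : IsTateZtheta K s θ (∑ i ∈ t, F i) := by
  classical
  induction t using Finset.induction_on with
  | empty => simpa using IsTateZtheta.zero
  | @insert a u hx ih =>
    rw [Finset.sum_insert hx]
    exact (h a (Finset.mem_insert_self a u)).add
      (ih fun i hi => h i (Finset.mem_insert_of_mem hi))

lemma IsTateZtheta.mul (hθ : 0 < ‖θ‖) {f g : PowerSeries (MvPowerSeries (Fin s) K)}
    (hf : IsTateZtheta K s θ f) (hg : IsTateZtheta K s θ g) : IsTateZtheta K s θ (f * g) := by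
  constructor
  · intro i
    rw [PowerSeries.coeff_mul]
    exact IsTate.sum _ _ fun p _ => (hf.1 p.1).mul (hg.1 p.2)
  · rw [Metric.tendsto_atTop]
    intro ε hε
    have hconv := conv_small (u := fun a => ‖θ‖ ^ a * gaussNorm K s (PowerSeries.coeff a f))
      (v := fun b => ‖θ‖ ^ b * gaussNorm K s (PowerSeries.coeff b g))
      (fun a => mul_nonneg (pow_nonneg hθ.le _) (gauss_nonneg _))
      (fun b => mul_nonneg (pow_nonneg hθ.le _) (gauss_nonneg _))
      hf.2 hg.2 (half_pos hε)
    obtain ⟨N, hN⟩ := Filter.eventually_atTop.mp hconv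
    refine ⟨N, fun i hi => ?_⟩
    have hpow : (0:ℝ) < ‖θ‖ ^ i := pow_pos hθ _
    have hgauss : gaussNorm K s (PowerSeries.coeff i (f * g)) ≤ (ε/2) / ‖θ‖ ^ i := by
      rw [PowerSeries.coeff_mul]
      refine gauss_sum_le (div_nonneg (half_pos hε).le hpow.le)
        (fun p _ => (hf.1 p.1).mul (hg.1 p.2)) (fun p hp => ?_)
      refine (gauss_mul_le (hf.1 p.1) (hg.1 p.2)).trans ?_
      rw [le_div_iff₀ hpow]
      have hsum : p.1 + p.2 = i := Finset.HasAntidiagonal.mem_antidiagonal.mp hp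
      have := (hN i hi p hsum).le
      calc gaussNorm K s (PowerSeries.coeff p.1 f) * gaussNorm K s (PowerSeries.coeff p.2 g) * ‖θ‖ ^ i
          = (‖θ‖ ^ p.1 * gaussNorm K s (PowerSeries.coeff p.1 f)) *
            (‖θ‖ ^ p.2 * gaussNorm K s (PowerSeries.coeff p.2 g)) := by
            rw [← hsum, pow_add]; ring
      _ ≤ ε/2 := this
    have h0 : (0:ℝ) ≤ ‖θ‖ ^ i * gaussNorm K s (PowerSeries.coeff i (f * g)) :=
      mul_nonneg hpow.le (gauss_nonneg _)
    rw [Real.dist_eq, sub_zero, abs_of_nonneg h0]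
    calc ‖θ‖ ^ i * gaussNorm K s (PowerSeries.coeff i (f * g))
        ≤ ‖θ‖ ^ i * ((ε/2) / ‖θ‖ ^ i) := mul_le_mul_of_nonneg_left hgauss hpow.le
    _ = ε/2 := by field_simp
    _ < ε := half_lt_self hε

end aux2


/-- Membership in `𝔽_q[t_1,…,t_s,z]` inside power series over `𝕋_s`: finitely many
nonzero `z`-coefficients, each a polynomial in `t_1,…,t_s` with coefficients in `𝔽_q`
(fixed by the `q`-power map). -/
def IsFqPolyZ (K : Type) [NontriviallyNormedField K] (s q : ℕ)
    (f : PowerSeries (MvPowerSeries (Fin s) K)) : Prop :=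
  {i : ℕ | PowerSeries.coeff i f ≠ 0}.Finite ∧
  (∀ i : ℕ, {ν : Fin s →₀ ℕ |
      MvPowerSeries.coeff ν (PowerSeries.coeff i f) ≠ 0}.Finite) ∧
  (∀ (i : ℕ) (ν : Fin s →₀ ℕ),
      (MvPowerSeries.coeff ν (PowerSeries.coeff i f)) ^ q
        = MvPowerSeries.coeff ν (PowerSeries.coeff i f))

/-- The companion matrix `Φ` with entries in `𝕋_s[z] ⊆ 𝕋_s{z/θ}` (power-series model). -/
def PhiMatZ (K : Type) [NontriviallyNormedField K] (s : ℕ) (τK : K ≃+* K) (r : ℕ) (θ : K)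
    (A : ℕ → MvPowerSeries (Fin s) K) (uinv : MvPowerSeries (Fin s) K) :
    Matrix (Fin r) (Fin r) (PowerSeries (MvPowerSeries (Fin s) K)) :=
  fun i j =>
    if (i : ℕ) + 1 < r then (if (j : ℕ) = (i : ℕ) + 1 then 1 else 0)
    else
      if (j : ℕ) = 0 then
        (PowerSeries.X - PowerSeries.C (MvPowerSeries.C (σ := Fin s) (R := K) θ))
          * PowerSeries.C uinv
      else
        - (PowerSeries.C
            ((⇑(twPS K s (τK.symm : K ≃+* K).toRingHom))^[(j : ℕ)] (A j))
          * PowerSeries.C uinv)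


section aux3
set_option linter.unusedSectionVars false
variable {K : Type} [NontriviallyNormedField K] [IsUltrametricDist K] {s : ℕ} {θ : K}

lemma norm_eq_one_of_pow {q : ℕ} (hq : 2 ≤ q) {a : K} (ha : a ^ q = a) (h0 : a ≠ 0) :
    ‖a‖ = 1 := by
  have h : ‖a‖ ^ q = ‖a‖ := by rw [← norm_pow, ha]
  have hx : (0:ℝ) < ‖a‖ := norm_pos_iff.mpr h0
  by_contra hne
  rcases lt_or_gt_of_ne hne with hlt | hgt
  · have h2 : ‖a‖ ^ q ≤ ‖a‖ ^ 2 := pow_le_pow_of_le_one hx.le hlt.le hq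
    nlinarith
  · have h2 : ‖a‖ ^ 2 ≤ ‖a‖ ^ q := pow_le_pow_right₀ hgt.le hq
    nlinarith

lemma exists_coeff_ne_zero {f : MvPowerSeries (Fin s) K} (hf : f ≠ 0) :
    ∃ ν, MvPowerSeries.coeff ν f ≠ 0 := by
  by_contra h
  push_neg at h
  exact hf (MvPowerSeries.ext fun ν => by rw [h]; simp)

end aux3

/-- if `Ψ ∈ GL_r(𝕋_s{z/θ})` satisfies `Ψ^{(-1)} = ΦΨ`, then
`V_φ = {g ∈ Mat_{1×r}(𝕋_s{z/θ}) : g^{(-1)}Φ = g}` equals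
`Mat_{1×r}(𝔽_q[t_1,…,t_s,z])·Ψ^{-1}`; in particular `V_φ` is free of rank `r` over
`𝔽_q[t_1,…,t_s,z]` (the rows of `Ψ^{-1}` being a basis). -/
theorem stmt10
    (K : Type) [NontriviallyNormedField K] [IsUltrametricDist K] [CompleteSpace K]
    (q : ℕ) (hq : IsPrimePow q)
    (τK : K ≃+* K) (hτK : ∀ x : K, τK x = x ^ q)
    (s : ℕ) (r : ℕ) (hr : 0 < r)
    (θ : K) (hθ : ‖θ‖ = q)
    (A : ℕ → MvPowerSeries (Fin s) K) (hA : ∀ k, IsTate K s (A k))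
    (uinv : MvPowerSeries (Fin s) K) (huinvT : IsTate K s uinv)
    (huinv : (⇑(twPS K s (τK.symm : K ≃+* K).toRingHom))^[r] (A r) * uinv = 1)
    (Ψ Ψinv : Matrix (Fin r) (Fin r) (PowerSeries (MvPowerSeries (Fin s) K)))
    (hΨT : ∀ i j, IsTateZtheta K s θ (Ψ i j))
    (hΨinvT : ∀ i j, IsTateZtheta K s θ (Ψinv i j))
    (hinv : Ψ * Ψinv = 1 ∧ Ψinv * Ψ = 1)
    (hΨeq : Ψ.map (PowerSeries.map (twPS K s (τK.symm : K ≃+* K).toRingHom))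
      = PhiMatZ K s τK r θ A uinv * Ψ) :
    (∀ g : Fin r → PowerSeries (MvPowerSeries (Fin s) K),
      ((∀ i, IsTateZtheta K s θ (g i)) ∧
        (∀ j : Fin r, ∑ i : Fin r,
          PowerSeries.map (twPS K s (τK.symm : K ≃+* K).toRingHom) (g i)
            * PhiMatZ K s τK r θ A uinv i j = g j))
      ↔ ∃ c : Fin r → PowerSeries (MvPowerSeries (Fin s) K),
          (∀ i, IsFqPolyZ K s q (c i)) ∧ ∀ j : Fin r, g j = ∑ i : Fin r, c i * Ψinv i j) ∧
    (∀ c : Fin r → PowerSeries (MvPowerSeries (Fin s) K),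
      (∀ i, IsFqPolyZ K s q (c i)) →
      (∀ j : Fin r, ∑ i : Fin r, c i * Ψinv i j = 0) → ∀ i, c i = 0) := by
  classical
  have hq2 : 2 ≤ q := hq.two_le
  have hθ1 : (1:ℝ) < ‖θ‖ := by
    rw [hθ]; exact_mod_cast (by omega : 1 < q)
  have hθpos : (0:ℝ) < ‖θ‖ := lt_trans one_pos hθ1
  set tw : MvPowerSeries (Fin s) K →+* MvPowerSeries (Fin s) K :=
    twPS K s (τK.symm : K ≃+* K).toRingHom with htwdef
  set Tw : PowerSeries (MvPowerSeries (Fin s) K) →+* PowerSeries (MvPowerSeries (Fin s) K) :=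
    PowerSeries.map tw with hTwdef
  set Φ := PhiMatZ K s τK r θ A uinv with hΦdef
  have coeff_Tw : ∀ (f : PowerSeries (MvPowerSeries (Fin s) K)) (i : ℕ) (ν : Fin s →₀ ℕ),
      MvPowerSeries.coeff ν (PowerSeries.coeff i (Tw f))
        = τK.symm (MvPowerSeries.coeff ν (PowerSeries.coeff i f)) := by
    intro f i ν
    rw [hTwdef, PowerSeries.coeff_map, htwdef]
    simp [twPS, MvPowerSeries.coeff_map]
  have fix_of_pow : ∀ f : PowerSeries (MvPowerSeries (Fin s) K),
      (∀ i ν, (MvPowerSeries.coeff ν (PowerSeries.coeff i f)) ^ q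
        = MvPowerSeries.coeff ν (PowerSeries.coeff i f)) → Tw f = f := by
    intro f h
    apply PowerSeries.ext; intro i
    apply MvPowerSeries.ext; intro ν
    have h4 : τK (MvPowerSeries.coeff ν (PowerSeries.coeff i f))
        = MvPowerSeries.coeff ν (PowerSeries.coeff i f) := by
      rw [hτK]; exact h i ν
    rw [coeff_Tw]
    conv_lhs => rw [← h4]
    rw [RingEquiv.symm_apply_apply]
  have pow_of_fix : ∀ f : PowerSeries (MvPowerSeries (Fin s) K), Tw f = f →
      ∀ i ν, (MvPowerSeries.coeff ν (PowerSeries.coeff i f)) ^ q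
        = MvPowerSeries.coeff ν (PowerSeries.coeff i f) := by
    intro f h i ν
    have h2 := coeff_Tw f i ν
    rw [h] at h2
    calc (MvPowerSeries.coeff ν (PowerSeries.coeff i f)) ^ q
        = τK (MvPowerSeries.coeff ν (PowerSeries.coeff i f)) := (hτK _).symm
    _ = τK (τK.symm (MvPowerSeries.coeff ν (PowerSeries.coeff i f))) := by rw [← h2]
    _ = _ := τK.apply_symm_apply _
  have hΨe : ∀ k i, Tw (Ψ k i) = ∑ l, Φ k l * Ψ l i := by
    intro k i
    have h3 := congrFun (congrFun hΨeq k) i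
    simpa [Matrix.map_apply, Matrix.mul_apply] using h3
  have isFqPolyZ_isTateZtheta : ∀ f : PowerSeries (MvPowerSeries (Fin s) K),
      IsFqPolyZ K s q f → IsTateZtheta K s θ f := by
    intro f hf
    constructor
    · intro i ε hε
      refine (hf.2.1 i).subset fun ν hν => ?_
      simp only [Set.mem_setOf_eq] at hν ⊢
      intro h0
      rw [h0, norm_zero] at hν
      exact absurd hν (not_le.mpr hε)
    · obtain ⟨N, hN⟩ := hf.1.bddAbove
      refine tendsto_const_nhds.congr' ?_
      refine Filter.eventually_atTop.mpr ⟨N + 1, fun i hi => ?_⟩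
      have h0 : PowerSeries.coeff i f = 0 := by
        by_contra hc
        have h6 : i ≤ N := hN hc
        omega
      simp [h0, gauss_zero]
  -- main proof
  refine ⟨fun g => ⟨?_, ?_⟩, ?_⟩
  · rintro ⟨hgT, hgE⟩
    have hcT : ∀ j, IsTateZtheta K s θ (∑ k, g k * Ψ k j) :=
      fun j => IsTateZtheta.sum _ _ fun k _ => IsTateZtheta.mul hθpos (hgT k) (hΨT k j)
    have hfix : ∀ j, Tw (∑ k, g k * Ψ k j) = ∑ k, g k * Ψ k j := by
      intro j
      rw [map_sum]
      calc ∑ k, Tw (g k * Ψ k j) = ∑ k, Tw (g k) * (∑ l, Φ k l * Ψ l j) := by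
            refine Finset.sum_congr rfl fun k _ => ?_
            rw [map_mul, hΨe k j]
      _ = ∑ l, (∑ k, Tw (g k) * Φ k l) * Ψ l j := by
            simp_rw [Finset.mul_sum, ← mul_assoc, Finset.sum_mul]
            exact Finset.sum_comm
      _ = ∑ l, g l * Ψ l j := by
            refine Finset.sum_congr rfl fun l _ => ?_
            rw [hgE l]
    have hpow : ∀ j i ν, (MvPowerSeries.coeff ν (PowerSeries.coeff i (∑ k, g k * Ψ k j))) ^ q
        = MvPowerSeries.coeff ν (PowerSeries.coeff i (∑ k, g k * Ψ k j)) :=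
      fun j => pow_of_fix _ (hfix j)
    have hnorm : ∀ j i ν, MvPowerSeries.coeff ν (PowerSeries.coeff i (∑ k, g k * Ψ k j)) ≠ 0 →
        ‖MvPowerSeries.coeff ν (PowerSeries.coeff i (∑ k, g k * Ψ k j))‖ = 1 :=
      fun j i ν h0 => norm_eq_one_of_pow hq2 (hpow j i ν) h0
    refine ⟨fun j => ∑ k, g k * Ψ k j, fun j => ⟨?_, fun i => ?_, hpow j⟩, fun j => ?_⟩
    · have hev : ∀ᶠ i in Filter.atTop,
          ‖θ‖ ^ i * gaussNorm K s (PowerSeries.coeff i (∑ k, g k * Ψ k j)) < 1 :=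
        (hcT j).2.eventually (Iio_mem_nhds one_pos)
      obtain ⟨N, hN⟩ := Filter.eventually_atTop.mp hev
      refine (Set.finite_Iio N).subset fun i hi => ?_
      simp only [Set.mem_setOf_eq] at hi
      by_contra hge
      simp only [Set.mem_Iio, not_lt] at hge
      obtain ⟨ν, hν⟩ := exists_coeff_ne_zero hi
      have h1 : (1:ℝ) ≤ gaussNorm K s (PowerSeries.coeff i (∑ k, g k * Ψ k j)) := by
        rw [← hnorm j i ν hν]
        exact le_gauss ((hcT j).1 i) ν
      have h2 : (1:ℝ) ≤ ‖θ‖ ^ i := one_le_pow₀ hθ1.le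
      have h3 := hN i hge
      nlinarith
    · refine ((hcT j).1 i 1 one_pos).subset fun ν hν => ?_
      simp only [Set.mem_setOf_eq] at hν ⊢
      rw [hnorm j i ν hν]
    · calc g j = ∑ k, g k * (1 : Matrix (Fin r) (Fin r)
            (PowerSeries (MvPowerSeries (Fin s) K))) k j := by
            simp [Matrix.one_apply]
      _ = ∑ k, g k * ∑ i, Ψ k i * Ψinv i j := by
            refine Finset.sum_congr rfl fun k _ => ?_
            rw [← hinv.1, Matrix.mul_apply]
      _ = ∑ i, (∑ k, g k * Ψ k i) * Ψinv i j := by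
            simp_rw [Finset.mul_sum, ← mul_assoc, Finset.sum_mul]
            exact Finset.sum_comm
  · rintro ⟨c, hcFq, hgc⟩
    have hcT : ∀ i, IsTateZtheta K s θ (c i) := fun i => isFqPolyZ_isTateZtheta _ (hcFq i)
    have hcfix : ∀ i, Tw (c i) = c i := fun i => fix_of_pow _ (hcFq i).2.2
    have hgT : ∀ j, IsTateZtheta K s θ (g j) := by
      intro j; rw [hgc j]
      exact IsTateZtheta.sum _ _ fun i _ => IsTateZtheta.mul hθpos (hcT i) (hΨinvT i j)
    refine ⟨hgT, fun j => ?_⟩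
    have hM : Ψinv.map Tw * (Ψ.map Tw) = 1 := by
      rw [← Matrix.map_mul, hinv.2, Matrix.map_one _ (map_zero Tw) (map_one Tw)]
    have hMΦ : (Ψinv.map Tw) * Φ = Ψinv := by
      have h1 : ((Ψinv.map Tw) * Φ) * Ψ = 1 := by
        rw [Matrix.mul_assoc, ← hΨeq, hM]
      calc (Ψinv.map Tw) * Φ = ((Ψinv.map Tw) * Φ) * (Ψ * Ψinv) := by
            rw [hinv.1, Matrix.mul_one]
      _ = (((Ψinv.map Tw) * Φ) * Ψ) * Ψinv := by rw [← Matrix.mul_assoc]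
      _ = Ψinv := by rw [h1, Matrix.one_mul]
    have hMΦe : ∀ k, (∑ i, (Ψinv.map Tw) k i * Φ i j) = Ψinv k j := by
      intro k
      have h3 := congrFun (congrFun hMΦ k) j
      simpa [Matrix.mul_apply] using h3
    have hTwg : ∀ i, Tw (g i) = ∑ k, c k * (Ψinv.map Tw) k i := by
      intro i
      rw [hgc i, map_sum]
      refine Finset.sum_congr rfl fun k _ => ?_
      rw [map_mul, hcfix k, Matrix.map_apply]
    calc ∑ i, Tw (g i) * Φ i j = ∑ i, (∑ k, c k * (Ψinv.map Tw) k i) * Φ i j := by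
          refine Finset.sum_congr rfl fun i _ => ?_
          rw [hTwg i]
    _ = ∑ k, c k * ∑ i, (Ψinv.map Tw) k i * Φ i j := by
          simp_rw [Finset.sum_mul, mul_assoc, Finset.mul_sum]
          exact Finset.sum_comm
    _ = ∑ k, c k * Ψinv k j := by
          refine Finset.sum_congr rfl fun k _ => ?_
          rw [hMΦe k]
    _ = g j := (hgc j).symm
  · intro c hcFq hzero i0
    calc c i0 = ∑ k, c k * (1 : Matrix (Fin r) (Fin r)
          (PowerSeries (MvPowerSeries (Fin s) K))) k i0 := by
          simp [Matrix.one_apply]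
    _ = ∑ k, c k * ∑ j, Ψinv k j * Ψ j i0 := by
          refine Finset.sum_congr rfl fun k _ => ?_
          rw [← hinv.2, Matrix.mul_apply]
    _ = ∑ j, (∑ k, c k * Ψinv k j) * Ψ j i0 := by
          simp_rw [Finset.mul_sum, ← mul_assoc, Finset.sum_mul]
          exact Finset.sum_comm
    _ = 0 := by
          simp only [hzero, zero_mul, Finset.sum_const_zero]
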